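/- Let β > 0 and let a be a real number with a ≥ exp(β). Then for every w ∈ [0,1], (exp(β·w) − 1)/(exp(β·w) + a) ≤ w · (exp(β) − 1)/(exp(β) + a). -/

import Mathlib

theorem convex_chord_bound (β a : ℝ) (hβ : 0 < β) (ha : Real.exp β ≤ a)
    (w : ℝ) (hw : w ∈ Set.Icc (0:ℝ) 1) :
    (Real.exp (β * w) - 1) / (Real.exp (β * w) + a)
      ≤ w * ((Real.exp β - 1) / (Real.exp β + a)) := by
  have hapos : 0 < a := lt_of_lt_of_le (Real.exp_pos β) ha
  set f : ℝ → ℝ := fun x => (Real.exp (β * x) - 1) / (Real.exp (β * x) + a) with hfdef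
  set f' : ℝ → ℝ := fun x => β * Real.exp (β * x) * (a + 1) / (Real.exp (β * x) + a) ^ 2
    with hf'def
  have hdenpos : ∀ x : ℝ, 0 < Real.exp (β * x) + a := fun x => by positivity
  have hden : ∀ x : ℝ, Real.exp (β * x) + a ≠ 0 := fun x => (hdenpos x).ne'
  have he : ∀ x : ℝ, HasDerivAt (fun y => Real.exp (β * y)) (β * Real.exp (β * x)) x := by
    intro x
    have h1 : HasDerivAt (fun y : ℝ => β * y) β x := by
      simpa using (hasDerivAt_id x).const_mul β
    simpa [mul_comm] using (h1.exp)
  have hd1 : ∀ x : ℝ, HasDerivAt f (f' x) x := by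
    intro x
    have h := ((he x).sub_const 1).fun_div ((he x).add_const a) (hden x)
    refine h.congr_deriv ?_
    simp only [hf'def]
    field_simp
    ring
  have hderiv1 : deriv f = f' := funext fun x => (hd1 x).deriv
  have hd2 : ∀ x : ℝ, HasDerivAt f'
      (β ^ 2 * (a + 1) * Real.exp (β * x) * (a - Real.exp (β * x)) /
        (Real.exp (β * x) + a) ^ 3) x := by
    intro x
    have hn : HasDerivAt (fun y => β * Real.exp (β * y) * (a + 1))
        (β * (β * Real.exp (β * x)) * (a + 1)) x := ((he x).const_mul β).mul_const (a + 1)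
    have hdd : HasDerivAt (fun y => (Real.exp (β * y) + a) ^ 2)
        (2 * (Real.exp (β * x) + a) ^ 1 * (β * Real.exp (β * x))) x := by
      simpa using ((he x).add_const a).fun_pow 2
    have h := hn.fun_div hdd (pow_ne_zero 2 (hden x))
    refine h.congr_deriv ?_
    field_simp
    ring
  have hconv : ConvexOn ℝ (Set.Icc (0:ℝ) 1) f := by
    apply convexOn_of_deriv2_nonneg (convex_Icc 0 1)
    · exact fun x _ => ((hd1 x).differentiableAt.continuousAt).continuousWithinAt
    · exact fun x _ => ((hd1 x).differentiableAt).differentiableWithinAt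
    · rw [hderiv1]
      exact fun x _ => ((hd2 x).differentiableAt).differentiableWithinAt
    · intro x hx
      rw [interior_Icc] at hx
      have hx1 : x < 1 := hx.2
      have hle : Real.exp (β * x) ≤ a := by
        refine le_trans (le_trans (Real.exp_le_exp.2 ?_) le_rfl) ha
        nlinarith [hx.1]
      have : deriv^[2] f x = β ^ 2 * (a + 1) * Real.exp (β * x) * (a - Real.exp (β * x)) /
          (Real.exp (β * x) + a) ^ 3 := by
        simp only [Function.iterate_succ, Function.iterate_zero, Function.comp_apply, id]
        rw [hderiv1]
        exact (hd2 x).deriv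
      rw [this]
      have h1 : 0 ≤ a - Real.exp (β * x) := by linarith
      positivity
  have h0 : (0:ℝ) ∈ Set.Icc (0:ℝ) 1 := by norm_num
  have h1 : (1:ℝ) ∈ Set.Icc (0:ℝ) 1 := by norm_num
  have key := hconv.2 h0 h1 (by linarith [hw.1, hw.2] : (0:ℝ) ≤ 1 - w) hw.1 (by ring)
  have hf0 : f 0 = 0 := by simp [hfdef]
  have hf1 : f 1 = (Real.exp β - 1) / (Real.exp β + a) := by simp [hfdef]
  simpa [hf0, hf1, smul_eq_mul] using key
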